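/- Let A be an m×n real matrix whose columns have ℓ2-norm 1, let 1 ≤ a ≤ s be integers with 2s−1 ≤ n−1, and set C_{a,s} = √((2s−a)/a). Assume μ₁(A, a−1) + C_{a,s}·μ₁(A, 2s−1) < 1. Let x ∈ ℝ^n, b = Ax + z with ‖Aᵀz‖_∞ ≤ η for some η ≥ 0, and let x̂ be a minimizer of ‖y‖₁ over all y ∈ ℝ^n with ‖Aᵀ(b − Ay)‖_∞ ≤ η (the Dantzig selector). Then ‖x̂ − x‖₂ ≤ [2√2·√s / (1 − μ₁(A,a−1) − C_{a,s}·μ₁(A,2s−1))]·η + [ (√2·(s/a)·μ₁(A,2s−1)) / ((1 − μ₁(A,a−1) − C_{a,s}·μ₁(A,2s−1))·C_{a,s}) + 1 ]·(2‖x_{−max(s)}‖₁/√s). -/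

import Mathlib

open scoped Classical
open Finset

/-- Cumulative coherence function μ₁(A, s). -/
noncomputable def mu1 {m n : ℕ} (A : Matrix (Fin m) (Fin n) ℝ) (s : ℕ) : ℝ :=
  sSup {t : ℝ | ∃ S : Finset (Fin n), S.card ≤ s ∧ ∃ i : Fin n, i ∉ S ∧
    t = ∑ j ∈ S, |∑ k : Fin m, A k i * A k j|}

/-- Greedy/polytope lemma: if `0 ≤ z ≤ 1` on `J` with `∑ z ≤ r`, and `γ ≥ 0` on `J`,
then `∑ z•γ` is at most the `γ`-sum over some subset of cardinality `≤ r`. -/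
lemma lemmaQ {ι : Type*} [DecidableEq ι] :
    ∀ (r : ℕ) (J : Finset ι) (z γ : ι → ℝ),
    (∀ j ∈ J, 0 ≤ z j) → (∀ j ∈ J, z j ≤ 1) → (∀ j ∈ J, 0 ≤ γ j) →
    (∑ j ∈ J, z j) ≤ (r : ℝ) →
    ∃ F : Finset ι, F ⊆ J ∧ F.card ≤ r ∧ ∑ j ∈ J, z j * γ j ≤ ∑ j ∈ F, γ j := by
  intro r
  induction r with
  | zero =>
    intro J z γ hz0 hz1 hγ0 hsum
    refine ⟨∅, empty_subset _, by simp, ?_⟩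
    have hz : ∀ j ∈ J, z j = 0 := by
      intro j hj
      have h1 : ∑ j ∈ J, z j = 0 :=
        le_antisymm (by exact_mod_cast hsum) (Finset.sum_nonneg hz0)
      exact (Finset.sum_eq_zero_iff_of_nonneg hz0).1 h1 j hj
    have : ∑ j ∈ J, z j * γ j = 0 := Finset.sum_eq_zero (fun j hj => by rw [hz j hj, zero_mul])
    simp [this]
  | succ r ih =>
    intro J z γ hz0 hz1 hγ0 hsum
    rcases J.eq_empty_or_nonempty with hJ | hJ
    · exact ⟨∅, empty_subset _, by simp, by simp [hJ]⟩
    obtain ⟨j₀, hj₀J, hj₀max⟩ := J.exists_max_image γ hJ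
    set J' := J.erase j₀ with hJ'
    have hJ'sub : J' ⊆ J := erase_subset _ _
    have hsplit : ∑ j ∈ J', z j * γ j + z j₀ * γ j₀ = ∑ j ∈ J, z j * γ j :=
      Finset.sum_erase_add J _ hj₀J
    have hsplitz : ∑ j ∈ J', z j + z j₀ = ∑ j ∈ J, z j :=
      Finset.sum_erase_add J _ hj₀J
    set σ := ∑ j ∈ J', z j with hσ
    have hγj₀ : 0 ≤ γ j₀ := hγ0 j₀ hj₀J
    by_cases hcase : σ ≤ (r : ℝ)
    · obtain ⟨F', hF'sub, hF'card, hF'⟩ := ih J' z γ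
        (fun j hj => hz0 j (hJ'sub hj)) (fun j hj => hz1 j (hJ'sub hj))
        (fun j hj => hγ0 j (hJ'sub hj)) hcase
      refine ⟨insert j₀ F', ?_, ?_, ?_⟩
      · exact insert_subset hj₀J (hF'sub.trans hJ'sub)
      · calc (insert j₀ F').card ≤ F'.card + 1 := card_insert_le _ _
          _ ≤ r + 1 := by omega
      · have hj₀F' : j₀ ∉ F' := fun h => (Finset.notMem_erase j₀ J) (hF'sub h)
        rw [Finset.sum_insert hj₀F']
        have : z j₀ * γ j₀ ≤ γ j₀ := by
          nlinarith [hz0 j₀ hj₀J, hz1 j₀ hj₀J]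
        linarith [hsplit]
    · push_neg at hcase
      have hσpos : 0 < σ := lt_of_le_of_lt (by positivity) hcase
      set c : ℝ := (r : ℝ) / σ with hc
      have hc0 : 0 ≤ c := by positivity
      have hc1 : c ≤ 1 := by
        rw [hc, div_le_one hσpos]; exact le_of_lt hcase
      obtain ⟨F', hF'sub, hF'card, hF'⟩ := ih J' (fun j => c * z j) γ
        (fun j hj => mul_nonneg hc0 (hz0 j (hJ'sub hj)))
        (fun j hj => by
          have h1 := hz1 j (hJ'sub hj); have h2 := hz0 j (hJ'sub hj)
          show c * z j ≤ 1
          nlinarith [hc0, hc1])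
        (fun j hj => hγ0 j (hJ'sub hj))
        (by
          rw [← Finset.mul_sum, ← hσ, hc, div_mul_cancel₀]
          exact ne_of_gt hσpos)
      have hbound : ∑ j ∈ J', z j * γ j ≤ ∑ j ∈ F', γ j + (1 - c) * (σ * γ j₀) := by
        have h1 : ∑ j ∈ J', z j * γ j
            = ∑ j ∈ J', (c * z j) * γ j + (1 - c) * ∑ j ∈ J', z j * γ j := by
          rw [Finset.mul_sum, ← Finset.sum_add_distrib]
          apply Finset.sum_congr rfl; intro j hj; ring
        have h2 : ∑ j ∈ J', z j * γ j ≤ σ * γ j₀ := by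
          rw [hσ, Finset.sum_mul]
          apply Finset.sum_le_sum
          intro j hj
          have := hz0 j (hJ'sub hj)
          have := hj₀max j (hJ'sub hj)
          nlinarith
        have h3 : (1 - c) * ∑ j ∈ J', z j * γ j ≤ (1 - c) * (σ * γ j₀) :=
          mul_le_mul_of_nonneg_left h2 (by linarith)
        linarith
      refine ⟨insert j₀ F', ?_, ?_, ?_⟩
      · exact insert_subset hj₀J (hF'sub.trans hJ'sub)
      · calc (insert j₀ F').card ≤ F'.card + 1 := card_insert_le _ _
          _ ≤ r + 1 := by omega
      · have hj₀F' : j₀ ∉ F' := fun h => (Finset.notMem_erase j₀ J) (hF'sub h)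
        rw [Finset.sum_insert hj₀F']
        have hzj : z j₀ + (σ - (r : ℝ)) ≤ 1 := by
          have : ∑ j ∈ J, z j ≤ (r : ℝ) + 1 := by push_cast at hsum ⊢; linarith
          linarith [hsplitz]
        have h4 : z j₀ * γ j₀ + (1 - c) * (σ * γ j₀) ≤ γ j₀ := by
          have hid : (1 - c) * σ = σ - (r : ℝ) := by
            rw [hc, sub_mul, div_mul_cancel₀ _ hσpos.ne', one_mul]
          have he : z j₀ * γ j₀ + (1 - c) * (σ * γ j₀)
              = (z j₀ + (σ - (r:ℝ))) * γ j₀ := by rw [← hid]; ring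
          rw [he]
          nlinarith
        linarith

/-- existence of a "top-k" set for a weight function -/
lemma exists_top {n : ℕ} (w : Fin n → ℝ) :
    ∀ k : ℕ, k ≤ n → ∃ V : Finset (Fin n), V.card = k ∧ ∀ i ∈ V, ∀ j ∉ V, w j ≤ w i := by
  intro k
  induction k with
  | zero => intro _; exact ⟨∅, rfl, by simp⟩
  | succ k ih =>
    intro hk
    obtain ⟨V, hVcard, hVtop⟩ := ih (by omega)
    have hVc : (Vᶜ : Finset (Fin n)).Nonempty := by
      rw [← Finset.card_pos, Finset.card_compl, hVcard, Fintype.card_fin]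
      omega
    obtain ⟨j₀, hj₀, hj₀max⟩ := Finset.exists_max_image Vᶜ w hVc
    have hj₀V : j₀ ∉ V := Finset.mem_compl.1 hj₀
    refine ⟨insert j₀ V, ?_, ?_⟩
    · rw [Finset.card_insert_of_notMem hj₀V, hVcard]
    · intro i hi j hj
      have hjV : j ∉ V := fun h => hj (Finset.mem_insert_of_mem h)
      rcases Finset.mem_insert.1 hi with h | h
      · subst h
        exact hj₀max j (Finset.mem_compl.2 hjV)
      · exact hVtop i h j hjV

section mu1facts
variable {m n : ℕ} (A : Matrix (Fin m) (Fin n) ℝ)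

lemma mu1_bddAbove (s : ℕ) :
    BddAbove {t : ℝ | ∃ S : Finset (Fin n), S.card ≤ s ∧ ∃ i : Fin n, i ∉ S ∧
      t = ∑ j ∈ S, |∑ k : Fin m, A k i * A k j|} := by
  apply Set.Finite.bddAbove
  apply Set.Finite.subset (Set.finite_range
    (fun p : Finset (Fin n) × Fin n => ∑ j ∈ p.1, |∑ k : Fin m, A k p.2 * A k j|))
  rintro t ⟨S, hS, i, hi, rfl⟩
  exact ⟨(S, i), rfl⟩

lemma le_mu1 (s : ℕ) (F : Finset (Fin n)) (i : Fin n) (hF : F.card ≤ s) (hi : i ∉ F) :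
    ∑ j ∈ F, |∑ k : Fin m, A k i * A k j| ≤ mu1 A s :=
  le_csSup (mu1_bddAbove A s) ⟨F, hF, i, hi, rfl⟩

lemma mu1_nonneg (hn : 1 ≤ n) (s : ℕ) : 0 ≤ mu1 A s := by
  have h0 : (0:ℝ) = ∑ j ∈ (∅ : Finset (Fin n)), |∑ k : Fin m, A k ⟨0, hn⟩ * A k j| := by simp
  rw [h0]
  exact le_mu1 A s ∅ ⟨0, hn⟩ (by simp) (by simp)

end mu1facts

set_option maxHeartbeats 2000000 in
/-- Error bound for the Dantzig selector under the cumulative coherence condition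
`μ₁(a−1) + C_{a,s} μ₁(2s−1) < 1` with `C_{a,s} = √((2s−a)/a)`.
Here `S` is any set of indices of the `s` largest-magnitude entries of `x`, so that
`‖x_{−max(s)}‖₁ = ∑_{j ∉ S} |x j|`. -/
theorem stmt4 {m n : ℕ} (A : Matrix (Fin m) (Fin n) ℝ)
    (hA : ∀ j, ∑ k, (A k j) ^ 2 = 1)
    (a s : ℕ) (ha : 1 ≤ a) (has : a ≤ s) (hsn : 2 * s - 1 ≤ n - 1)
    (C : ℝ) (hC : C = Real.sqrt ((2 * (s : ℝ) - a) / a))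
    (hcond : mu1 A (a - 1) + C * mu1 A (2 * s - 1) < 1)
    (η : ℝ) (hη : 0 ≤ η)
    (x : Fin n → ℝ) (z : Fin m → ℝ) (b : Fin m → ℝ)
    (hb : b = A.mulVec x + z)
    (hz : ∀ i, |A.transpose.mulVec z i| ≤ η)
    (xh : Fin n → ℝ)
    (hfeas : ∀ i, |A.transpose.mulVec (b - A.mulVec xh) i| ≤ η)
    (hmin : ∀ y : Fin n → ℝ, (∀ i, |A.transpose.mulVec (b - A.mulVec y) i| ≤ η) →
      ∑ i, |xh i| ≤ ∑ i, |y i|)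
    (S : Finset (Fin n)) (hScard : S.card = s)
    (hSmax : ∀ i ∈ S, ∀ j ∉ S, |x j| ≤ |x i|) :
    Real.sqrt (∑ i, (xh i - x i) ^ 2) ≤
      2 * Real.sqrt 2 * Real.sqrt s / (1 - mu1 A (a - 1) - C * mu1 A (2 * s - 1)) * η +
      (Real.sqrt 2 * ((s : ℝ) / a) * mu1 A (2 * s - 1) /
          ((1 - mu1 A (a - 1) - C * mu1 A (2 * s - 1)) * C) + 1) *
        (2 * (∑ j ∈ Sᶜ, |x j|) / Real.sqrt s) := by
  classical
  -- notation
  set μ' := mu1 A (a - 1) with hμ'def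
  set μ := mu1 A (2 * s - 1) with hμdef
  set t := ∑ j ∈ Sᶜ, |x j| with htdef
  set h : Fin n → ℝ := fun i => xh i - x i with hhdef
  set g : Fin n → Fin n → ℝ := fun i j => |∑ k, A k i * A k j| with hgdef
  clear_value μ' μ t h g
  -- basic numeric facts
  have hn2s : 2 * s ≤ n := by omega
  have hn1 : 1 ≤ n := by omega
  set r : ℕ := 2 * s - a with hrdef
  have hra : a ≤ r := by omega
  have hr1 : 1 ≤ r := by omega
  have hrcast : (r : ℝ) = 2 * (s:ℝ) - a := by
    rw [hrdef, Nat.cast_sub (by omega : a ≤ 2 * s)]; push_cast; ring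
  clear_value r
  have hsacast : ((s - a : ℕ) : ℝ) = (s:ℝ) - a := by
    rw [Nat.cast_sub has]
  have haR : (0:ℝ) < a := by exact_mod_cast (by omega : 0 < a)
  have hsR : (1:ℝ) ≤ s := by exact_mod_cast (by omega : 1 ≤ s)
  have hasR : (a:ℝ) ≤ s := by exact_mod_cast has
  have hrR : (0:ℝ) < r := by exact_mod_cast (by omega : 0 < r)
  have harR : (a:ℝ) ≤ r := by exact_mod_cast hra
  -- sqrt quantities
  have h2sa0 : (0:ℝ) ≤ (2 * (s:ℝ) - a) / a := by
    apply div_nonneg _ haR.le; linarith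
  have hCsq : C^2 = (2 * (s:ℝ) - a) / a := by
    rw [hC]; exact Real.sq_sqrt h2sa0
  have hC1 : 1 ≤ C := by
    rw [hC]
    calc (1:ℝ) = Real.sqrt 1 := Real.sqrt_one.symm
      _ ≤ _ := Real.sqrt_le_sqrt (by rw [le_div_iff₀ haR]; linarith)
  have hC0 : 0 < C := lt_of_lt_of_le zero_lt_one hC1
  have hμ0 : 0 ≤ μ := by rw [hμdef]; exact mu1_nonneg A hn1 _
  have hμ'0 : 0 ≤ μ' := by rw [hμ'def]; exact mu1_nonneg A hn1 _
  have hD : 0 < 1 - μ' - C * μ := by linarith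
  have ht0 : 0 ≤ t := by rw [htdef]; exact Finset.sum_nonneg fun j _ => abs_nonneg _
  -- the residual satisfies the 2η dual bound
  have hu : ∀ i, |∑ j, (∑ k, A k i * A k j) * h j| ≤ 2 * η := by
    intro i
    have lhs1 : ∑ j, (∑ k, A k i * A k j) * h j
        = ∑ k, A k i * (∑ j, A k j * h j) := by
      calc ∑ j, (∑ k, A k i * A k j) * h j
          = ∑ j, ∑ k, A k i * A k j * h j := by
            refine Finset.sum_congr rfl fun j _ => ?_
            rw [Finset.sum_mul]
        _ = ∑ k, ∑ j, A k i * A k j * h j := Finset.sum_comm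
        _ = ∑ k, A k i * (∑ j, A k j * h j) := by
            refine Finset.sum_congr rfl fun k _ => ?_
            rw [Finset.mul_sum]
            exact Finset.sum_congr rfl fun j _ => by ring
    have rhs1 : A.transpose.mulVec z i - A.transpose.mulVec (b - A.mulVec xh) i
        = ∑ k, A k i * (∑ j, A k j * h j) := by
      simp only [Matrix.mulVec, dotProduct, Matrix.transpose_apply, Pi.sub_apply,
        hb, Pi.add_apply, hhdef]
      rw [← Finset.sum_sub_distrib]
      refine Finset.sum_congr rfl fun k _ => ?_
      have hsub : (∑ j, A k j * (xh j - x j))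
          = (∑ j, A k j * xh j) - ∑ j, A k j * x j := by
        rw [← Finset.sum_sub_distrib]
        exact Finset.sum_congr rfl fun j _ => by ring
      rw [hsub]; ring
    rw [lhs1, ← rhs1]
    calc |A.transpose.mulVec z i - A.transpose.mulVec (b - A.mulVec xh) i|
        = |A.transpose.mulVec z i + -(A.transpose.mulVec (b - A.mulVec xh) i)| := by
          rw [sub_eq_add_neg]
      _ ≤ |A.transpose.mulVec z i| + |-(A.transpose.mulVec (b - A.mulVec xh) i)| := abs_add_le _ _
      _ = |A.transpose.mulVec z i| + |A.transpose.mulVec (b - A.mulVec xh) i| := by rw [abs_neg]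
      _ ≤ η + η := add_le_add (hz i) (hfeas i)
      _ = 2 * η := by ring
  -- x itself is feasible, so the minimality gives the cone constraint
  have hfx : ∀ i, |A.transpose.mulVec (b - A.mulVec x) i| ≤ η := by
    intro i
    have hbz : b - A.mulVec x = z := by rw [hb]; abel
    rw [hbz]; exact hz i
  have hxhx : ∑ i, |xh i| ≤ ∑ i, |x i| := hmin x hfx
  have hcone : ∑ j ∈ Sᶜ, |h j| ≤ ∑ j ∈ S, |h j| + 2 * t := by
    have c1 : ∑ i ∈ S, (|x i| - |h i|) ≤ ∑ i ∈ S, |xh i| := by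
      refine Finset.sum_le_sum fun i _ => ?_
      have h1 : |x i| - |xh i| ≤ |x i - xh i| := abs_sub_abs_le_abs_sub _ _
      have h2 : |x i - xh i| = |h i| := by
        simp only [hhdef]; rw [abs_sub_comm]
      linarith
    have c2 : ∑ i ∈ Sᶜ, (|h i| - |x i|) ≤ ∑ i ∈ Sᶜ, |xh i| := by
      refine Finset.sum_le_sum fun i _ => ?_
      have h1 : |h i| ≤ |xh i| + |x i| := by
        simp only [hhdef]
        calc |xh i - x i| = |xh i + -(x i)| := by rw [sub_eq_add_neg]
          _ ≤ |xh i| + |-(x i)| := abs_add_le _ _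
          _ = |xh i| + |x i| := by rw [abs_neg]
      linarith
    have s1 : ∑ i ∈ S, |xh i| + ∑ i ∈ Sᶜ, |xh i| = ∑ i, |xh i| := Finset.sum_add_sum_compl S _
    have s2 : ∑ i ∈ S, |x i| + ∑ i ∈ Sᶜ, |x i| = ∑ i, |x i| := Finset.sum_add_sum_compl S _
    have e1 : ∑ i ∈ S, (|x i| - |h i|) = ∑ i ∈ S, |x i| - ∑ i ∈ S, |h i| :=
      Finset.sum_sub_distrib _ _
    have e2 : ∑ i ∈ Sᶜ, (|h i| - |x i|) = ∑ i ∈ Sᶜ, |h i| - ∑ i ∈ Sᶜ, |x i| :=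
      Finset.sum_sub_distrib _ _
    have e3 : t = ∑ i ∈ Sᶜ, |x i| := htdef
    linarith only [c1, c2, s1, s2, e1, e2, e3, hxhx]
  -- the top-a set V
  obtain ⟨V, hVcard, hVtop⟩ := exists_top (fun i => |h i|) a (by omega)
  have hVcne : (Vᶜ : Finset (Fin n)).Nonempty := by
    rw [← Finset.card_pos, Finset.card_compl, hVcard, Fintype.card_fin]
    omega
  have hVne : V.Nonempty := by
    rw [← Finset.card_pos, hVcard]; omega
  set mm := Vᶜ.sup' hVcne (fun j => |h j|) with hmmdef
  have hmle : ∀ j, j ∉ V → |h j| ≤ mm := by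
    intro j hj
    rw [hmmdef]
    exact Finset.le_sup' (fun j => |h j|) (Finset.mem_compl.2 hj)
  have hm0 : 0 ≤ mm := by
    obtain ⟨j, hj⟩ := hVcne
    refine le_trans (abs_nonneg (h j)) ?_
    rw [hmmdef]
    exact Finset.le_sup' (fun j => |h j|) hj
  have hmge : ∀ i ∈ V, mm ≤ |h i| := by
    intro i hi
    apply Finset.sup'_le
    intro j hj
    exact hVtop i hi j (Finset.mem_compl.1 hj)
  clear_value mm
  -- main quantities
  set E := ∑ i ∈ V, (h i)^2 with hEdef
  set P1 := ∑ i ∈ V, |h i| with hP1def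
  set Q' := ∑ j ∈ Vᶜ, |h j| with hQ'def
  have hE0 : 0 ≤ E := Finset.sum_nonneg fun i _ => sq_nonneg _
  set N := Real.sqrt E with hNdef
  have hN0 : 0 ≤ N := Real.sqrt_nonneg _
  have hN2 : N^2 = E := Real.sq_sqrt hE0
  have hP10 : 0 ≤ P1 := Finset.sum_nonneg fun i _ => abs_nonneg _
  have hQ'0 : 0 ≤ Q' := Finset.sum_nonneg fun j _ => abs_nonneg _
  clear_value E P1 Q' N
  set sqa := Real.sqrt (a:ℝ) with hsqadef
  have hsqa0 : 0 < sqa := Real.sqrt_pos.2 haR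
  have hsqa2 : sqa^2 = (a:ℝ) := Real.sq_sqrt haR.le
  clear_value sqa
  -- Cauchy-Schwarz: P1 ≤ √a N
  have hP1sq : P1^2 ≤ (a:ℝ) * E := by
    have hcs := sq_sum_le_card_mul_sum_sq (s := V) (f := fun i => |h i|)
    have habs : ∑ i ∈ V, |h i|^2 = E := by
      rw [hEdef]; exact Finset.sum_congr rfl fun i _ => sq_abs _
    rw [habs, hVcard] at hcs
    rw [hP1def]
    exact_mod_cast hcs
  have hP1N : P1 ≤ sqa * N := by
    have h1 : P1 = Real.sqrt (P1^2) := (Real.sqrt_sq hP10).symm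
    rw [h1, hNdef, hsqadef, ← Real.sqrt_mul haR.le]
    exact Real.sqrt_le_sqrt hP1sq
  have ham2 : (a:ℝ) * mm^2 ≤ E := by
    have h1 : ∀ i ∈ V, mm^2 ≤ (h i)^2 := by
      intro i hi
      have := hmge i hi
      calc mm^2 ≤ |h i|^2 := pow_le_pow_left₀ hm0 this 2
        _ = (h i)^2 := sq_abs _
    calc (a:ℝ) * mm^2 = ∑ _i ∈ V, mm^2 := by
          rw [Finset.sum_const, hVcard, nsmul_eq_mul]
      _ ≤ ∑ i ∈ V, (h i)^2 := Finset.sum_le_sum h1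
      _ = E := hEdef.symm
  have hmN : sqa * mm ≤ N := by
    rw [hsqadef, hNdef]
    have h1 : Real.sqrt (a:ℝ) * mm = Real.sqrt ((a:ℝ) * mm^2) := by
      rw [Real.sqrt_mul haR.le, Real.sqrt_sq hm0]
    rw [h1]
    exact Real.sqrt_le_sqrt ham2
  have hP1mE : P1 * mm ≤ E := by
    calc P1 * mm ≤ (sqa * N) * mm := mul_le_mul_of_nonneg_right hP1N hm0
      _ = N * (sqa * mm) := by ring
      _ ≤ N * N := mul_le_mul_of_nonneg_left hmN hN0
      _ = E := by rw [← hN2]; ring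
  -- ℓ¹ of h on S is dominated through the top-a set
  have hS_le : ∑ i ∈ S, |h i| ≤ P1 + ((s - a : ℕ):ℝ) * mm := by
    have d1 : ∑ i ∈ S ∩ V, |h i| + ∑ i ∈ S \ V, |h i| = ∑ i ∈ S, |h i| :=
      Finset.sum_inter_add_sum_sdiff S V _
    have d2 : ∑ i ∈ V ∩ S, |h i| + ∑ i ∈ V \ S, |h i| = ∑ i ∈ V, |h i| :=
      Finset.sum_inter_add_sum_sdiff V S _
    have d3 : ∑ i ∈ S \ V, |h i| ≤ ((S \ V).card : ℝ) * mm := by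
      calc ∑ i ∈ S \ V, |h i| ≤ ∑ _i ∈ S \ V, mm :=
            Finset.sum_le_sum fun i hi => hmle i (Finset.mem_sdiff.1 hi).2
        _ = ((S \ V).card : ℝ) * mm := by rw [Finset.sum_const, nsmul_eq_mul]
    have d4 : ((V \ S).card : ℝ) * mm ≤ ∑ i ∈ V \ S, |h i| := by
      calc ((V \ S).card : ℝ) * mm = ∑ _i ∈ V \ S, mm := by
            rw [Finset.sum_const, nsmul_eq_mul]
        _ ≤ ∑ i ∈ V \ S, |h i| :=
            Finset.sum_le_sum fun i hi => hmge i (Finset.mem_sdiff.1 hi).1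
    have hcards : (S \ V).card = (V \ S).card + (s - a) := by
      have c1 : (S \ V).card + (S ∩ V).card = S.card := Finset.card_sdiff_add_card_inter S V
      have c2 : (V \ S).card + (V ∩ S).card = V.card := Finset.card_sdiff_add_card_inter V S
      have c3 : (S ∩ V).card = (V ∩ S).card := by rw [Finset.inter_comm]
      omega
    have hcardsR : ((S \ V).card : ℝ) = ((V \ S).card : ℝ) + ((s - a : ℕ):ℝ) := by
      exact_mod_cast congrArg (Nat.cast : ℕ → ℝ) hcards
    have hintc : ∑ i ∈ S ∩ V, |h i| = ∑ i ∈ V ∩ S, |h i| := by rw [Finset.inter_comm]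
    have hprod : ((S \ V).card : ℝ) * mm
        = ((V \ S).card : ℝ) * mm + ((s - a : ℕ):ℝ) * mm := by
      rw [hcardsR]; ring
    linarith only [d1, d2, d3, d4, hprod, hintc, hP1def]
  have hQ'bound : Q' ≤ P1 + 2 * ((s - a : ℕ):ℝ) * mm + 2 * t := by
    have u1 : ∑ i ∈ V, |h i| + ∑ j ∈ Vᶜ, |h j| = ∑ i, |h i| := Finset.sum_add_sum_compl V _
    have u2 : ∑ i ∈ S, |h i| + ∑ i ∈ Sᶜ, |h i| = ∑ i, |h i| := Finset.sum_add_sum_compl S _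
    linarith only [hcone, hS_le, u1, u2, hP1def, hQ'def]
  -- the basic quadratic identity estimate
  have hI1 : E ≤ 2*η*P1 + ((∑ i ∈ V, ∑ j ∈ V.erase i, g i j * (|h i| * |h j|))
      + ∑ i ∈ V, ∑ j ∈ Vᶜ, g i j * (|h i| * |h j|)) := by
    have hper : ∀ i ∈ V, h i ^ 2 ≤ |h i| * (2*η)
        + (∑ j ∈ V.erase i, g i j * (|h i| * |h j|)
          + ∑ j ∈ Vᶜ, g i j * (|h i| * |h j|)) := by
      intro i hi
      have hGii : (∑ k, A k i * A k i) = 1 := by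
        have h1 := hA i
        rw [← h1]
        exact Finset.sum_congr rfl fun k _ => (pow_two (A k i)).symm
      have hsplit : ∑ j ∈ Finset.univ.erase i, (∑ k, A k i * A k j) * h j
          + (∑ k, A k i * A k i) * h i = ∑ j, (∑ k, A k i * A k j) * h j :=
        Finset.sum_erase_add _ _ (Finset.mem_univ i)
      have hrep : h i = (∑ j, (∑ k, A k i * A k j) * h j)
          - ∑ j ∈ Finset.univ.erase i, (∑ k, A k i * A k j) * h j := by
        rw [← hsplit, hGii]; ring
      have b1 : h i * (∑ j, (∑ k, A k i * A k j) * h j) ≤ |h i| * (2*η) := by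
        calc h i * (∑ j, (∑ k, A k i * A k j) * h j)
            ≤ |h i * (∑ j, (∑ k, A k i * A k j) * h j)| := le_abs_self _
          _ = |h i| * |∑ j, (∑ k, A k i * A k j) * h j| := abs_mul _ _
          _ ≤ |h i| * (2*η) := mul_le_mul_of_nonneg_left (hu i) (abs_nonneg _)
      have b2 : -(h i * ∑ j ∈ Finset.univ.erase i, (∑ k, A k i * A k j) * h j)
          ≤ ∑ j ∈ Finset.univ.erase i, g i j * (|h i| * |h j|) := by
        rw [Finset.mul_sum, ← Finset.sum_neg_distrib]
        refine Finset.sum_le_sum fun j _ => ?_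
        calc -(h i * ((∑ k, A k i * A k j) * h j))
            ≤ |h i * ((∑ k, A k i * A k j) * h j)| := neg_le_abs _
          _ = |h i| * (|∑ k, A k i * A k j| * |h j|) := by rw [abs_mul, abs_mul]
          _ = g i j * (|h i| * |h j|) := by rw [hgdef]; ring
      have hsplitJ : (Finset.univ.erase i : Finset (Fin n)) = (V.erase i) ∪ Vᶜ := by
        ext j
        simp only [Finset.mem_erase, Finset.mem_univ, and_true, Finset.mem_union,
          Finset.mem_compl]
        constructor
        · intro hji
          by_cases hjV : j ∈ V
          · exact Or.inl ⟨hji, hjV⟩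
          · exact Or.inr hjV
        · rintro (⟨hji, _⟩ | hjV)
          · exact hji
          · intro hji; exact hjV (hji ▸ hi)
      have hdisj : Disjoint (V.erase i) (Vᶜ : Finset (Fin n)) :=
        Disjoint.mono_left (Finset.erase_subset _ _) disjoint_compl_right
      have hsum2 : ∑ j ∈ Finset.univ.erase i, g i j * (|h i| * |h j|)
          = ∑ j ∈ V.erase i, g i j * (|h i| * |h j|)
            + ∑ j ∈ Vᶜ, g i j * (|h i| * |h j|) := by
        rw [hsplitJ, Finset.sum_union hdisj]
      have hq : h i ^ 2 = h i * (∑ j, (∑ k, A k i * A k j) * h j)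
          + -(h i * ∑ j ∈ Finset.univ.erase i, (∑ k, A k i * A k j) * h j) := by
        calc h i ^ 2 = h i * ((∑ j, (∑ k, A k i * A k j) * h j)
            - ∑ j ∈ Finset.univ.erase i, (∑ k, A k i * A k j) * h j) := by
              rw [← hrep]; ring
          _ = _ := by ring
      linarith only [b1, b2, hq, hsum2]
    calc E = ∑ i ∈ V, h i ^ 2 := hEdef
      _ ≤ ∑ i ∈ V, (|h i| * (2*η)
        + (∑ j ∈ V.erase i, g i j * (|h i| * |h j|)
          + ∑ j ∈ Vᶜ, g i j * (|h i| * |h j|))) := Finset.sum_le_sum hper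
      _ = 2*η*P1 + ((∑ i ∈ V, ∑ j ∈ V.erase i, g i j * (|h i| * |h j|))
          + ∑ i ∈ V, ∑ j ∈ Vᶜ, g i j * (|h i| * |h j|)) := by
        rw [Finset.sum_add_distrib, Finset.sum_add_distrib, ← Finset.sum_mul]
        rw [hP1def]; ring
  -- bounding the intra-V coupling
  have hg0 : ∀ i j, 0 ≤ g i j := fun i j => by rw [hgdef]; exact abs_nonneg _
  have hgsymm : ∀ i j, g i j = g j i := by
    intro i j
    simp only [hgdef]
    congr 1
    exact Finset.sum_congr rfl fun k _ => mul_comm _ _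
  have hbudget' : ∀ i ∈ V, ∑ j ∈ V.erase i, g i j ≤ μ' := by
    intro i hi
    rw [hμ'def, hgdef]
    exact le_mu1 A (a-1) (V.erase i) i
      (by rw [Finset.card_erase_of_mem hi, hVcard]) (Finset.notMem_erase i V)
  have pairswap : ∀ (F : Fin n → Fin n → ℝ),
      (∑ i ∈ V, ∑ j ∈ V.erase i, F i j) = ∑ j ∈ V, ∑ i ∈ V.erase j, F i j := by
    intro F
    have e : ∀ i : Fin n, (V.erase i) = V.filter (fun j => j ≠ i) :=
      fun i => (Finset.filter_ne' V i).symm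
    calc ∑ i ∈ V, ∑ j ∈ V.erase i, F i j
        = ∑ i ∈ V, ∑ j ∈ V, if j ≠ i then F i j else 0 := by
          refine Finset.sum_congr rfl fun i _ => ?_
          rw [e i, Finset.sum_filter]
      _ = ∑ j ∈ V, ∑ i ∈ V, if j ≠ i then F i j else 0 := Finset.sum_comm
      _ = ∑ j ∈ V, ∑ i ∈ V.erase j, F i j := by
          refine Finset.sum_congr rfl fun j _ => ?_
          rw [e j, Finset.sum_filter]
          refine Finset.sum_congr rfl fun i _ => ?_
          by_cases hij : i = j
          · subst hij; simp
          · have h1 : j ≠ i := fun hq => hij hq.symm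
            simp [hij, h1]
  have hintra : (∑ i ∈ V, ∑ j ∈ V.erase i, g i j * (|h i| * |h j|)) ≤ μ' * E := by
    have step1 : (∑ i ∈ V, ∑ j ∈ V.erase i, g i j * (|h i| * |h j|))
        ≤ ∑ i ∈ V, ∑ j ∈ V.erase i, g i j * ((h i^2 + h j^2)/2) := by
      refine Finset.sum_le_sum fun i _ => Finset.sum_le_sum fun j _ => ?_
      have hab : |h i| * |h j| ≤ (h i^2 + h j^2)/2 := by
        have h2 := two_mul_le_add_sq |h i| |h j|
        rw [sq_abs, sq_abs] at h2
        linarith only [h2]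
      exact mul_le_mul_of_nonneg_left hab (hg0 i j)
    have step2 : ∑ i ∈ V, ∑ j ∈ V.erase i, g i j * ((h i^2 + h j^2)/2)
        = (∑ i ∈ V, ∑ j ∈ V.erase i, g i j * h i^2) / 2
          + (∑ i ∈ V, ∑ j ∈ V.erase i, g i j * h j^2) / 2 := by
      rw [Finset.sum_div, Finset.sum_div, ← Finset.sum_add_distrib]
      refine Finset.sum_congr rfl fun i _ => ?_
      rw [Finset.sum_div, Finset.sum_div, ← Finset.sum_add_distrib]
      exact Finset.sum_congr rfl fun j _ => by ring
    have T1 : (∑ i ∈ V, ∑ j ∈ V.erase i, g i j * h i^2) ≤ μ' * E := by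
      calc ∑ i ∈ V, ∑ j ∈ V.erase i, g i j * h i^2
          = ∑ i ∈ V, (∑ j ∈ V.erase i, g i j) * h i^2 := by
            refine Finset.sum_congr rfl fun i _ => ?_
            rw [Finset.sum_mul]
        _ ≤ ∑ i ∈ V, μ' * h i^2 := by
            refine Finset.sum_le_sum fun i hi => ?_
            exact mul_le_mul_of_nonneg_right (hbudget' i hi) (sq_nonneg _)
        _ = μ' * E := by rw [hEdef, Finset.mul_sum]
    have T2 : (∑ i ∈ V, ∑ j ∈ V.erase i, g i j * h j^2) ≤ μ' * E := by
      rw [pairswap (fun i j => g i j * h j^2)]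
      calc ∑ j ∈ V, ∑ i ∈ V.erase j, g i j * h j^2
          = ∑ j ∈ V, (∑ i ∈ V.erase j, g j i) * h j^2 := by
            refine Finset.sum_congr rfl fun j _ => ?_
            rw [Finset.sum_mul]
            exact Finset.sum_congr rfl fun i _ => by rw [hgsymm i j]
        _ ≤ ∑ j ∈ V, μ' * h j^2 := by
            refine Finset.sum_le_sum fun j hj => ?_
            refine mul_le_mul_of_nonneg_right ?_ (sq_nonneg _)
            rw [hμ'def, hgdef]
            exact le_mu1 A (a-1) (V.erase j) j
              (by rw [Finset.card_erase_of_mem hj, hVcard]) (Finset.notMem_erase j V)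
        _ = μ' * E := by rw [hEdef, Finset.mul_sum]
    linarith only [step1, step2, T1, T2]
  -- cross term bound via the polytope lemma
  set θ := max mm (Q' / (r:ℝ)) with hθdef
  have hθ0 : 0 ≤ θ := le_trans hm0 (le_max_left _ _)
  have hθm : mm ≤ θ := le_max_left _ _
  have hθQ : Q' ≤ (r:ℝ) * θ := by
    have h1 : Q'/(r:ℝ) ≤ θ := le_max_right _ _
    have h2 : Q' = (r:ℝ) * (Q'/(r:ℝ)) := by field_simp
    rw [h2]
    exact mul_le_mul_of_nonneg_left h1 hrR.le
  have hcross : (∑ i ∈ V, ∑ j ∈ Vᶜ, g i j * (|h i| * |h j|)) ≤ μ * (P1 * θ) := by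
    have hswap : (∑ i ∈ V, ∑ j ∈ Vᶜ, g i j * (|h i| * |h j|))
        = ∑ j ∈ Vᶜ, |h j| * (∑ i ∈ V, g i j * |h i|) := by
      rw [Finset.sum_comm]
      refine Finset.sum_congr rfl fun j _ => ?_
      rw [Finset.mul_sum]
      exact Finset.sum_congr rfl fun i _ => by ring
    by_cases hθz : θ = 0
    · have hall : ∀ j ∈ (Vᶜ : Finset (Fin n)), |h j| = 0 := by
        intro j hj
        have h1 : |h j| ≤ mm := hmle j (Finset.mem_compl.1 hj)
        have h2 : mm ≤ 0 := hθz ▸ hθm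
        exact le_antisymm (le_trans h1 h2) (abs_nonneg _)
      have hzero : (∑ i ∈ V, ∑ j ∈ Vᶜ, g i j * (|h i| * |h j|)) = 0 := by
        rw [hswap]
        exact Finset.sum_eq_zero fun j hj => by rw [hall j hj, zero_mul]
      rw [hzero, hθz]
      have : μ * (P1 * 0) = 0 := by ring
      rw [this]
    · have hθpos : 0 < θ := lt_of_le_of_ne hθ0 (Ne.symm hθz)
      obtain ⟨F, hFsub, hFcard, hFbound⟩ := lemmaQ r Vᶜ (fun j => |h j|/θ)
        (fun j => ∑ i ∈ V, g i j * |h i|)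
        (fun j _ => by positivity)
        (fun j hj => by
          rw [div_le_one hθpos]
          exact le_trans (hmle j (Finset.mem_compl.1 hj)) hθm)
        (fun j _ => Finset.sum_nonneg fun i _ => mul_nonneg (hg0 i j) (abs_nonneg _))
        (by
          rw [← Finset.sum_div, ← hQ'def, div_le_iff₀ hθpos]
          linarith only [hθQ])
      have hFγ : ∑ j ∈ F, ∑ i ∈ V, g i j * |h i| ≤ μ * P1 := by
        rw [Finset.sum_comm]
        have hbb : ∀ i ∈ V, (∑ j ∈ F, g i j * |h i|) ≤ μ * |h i| := by
          intro i hi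
          have hiF : i ∉ F := fun hiF => (Finset.mem_compl.1 (hFsub hiF)) hi
          have hcard2 : F.card ≤ 2*s - 1 := le_trans hFcard (by omega)
          have hbud : ∑ j ∈ F, g i j ≤ μ := by
            rw [hμdef, hgdef]
            exact le_mu1 A (2*s-1) F i hcard2 hiF
          calc ∑ j ∈ F, g i j * |h i| = (∑ j ∈ F, g i j) * |h i| := by rw [Finset.sum_mul]
            _ ≤ μ * |h i| := mul_le_mul_of_nonneg_right hbud (abs_nonneg _)
        calc ∑ i ∈ V, ∑ j ∈ F, g i j * |h i| ≤ ∑ i ∈ V, μ * |h i| := Finset.sum_le_sum hbb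
          _ = μ * P1 := by rw [hP1def, Finset.mul_sum]
      calc (∑ i ∈ V, ∑ j ∈ Vᶜ, g i j * (|h i| * |h j|))
          = ∑ j ∈ Vᶜ, |h j| * (∑ i ∈ V, g i j * |h i|) := hswap
        _ = θ * ∑ j ∈ Vᶜ, (|h j|/θ) * (∑ i ∈ V, g i j * |h i|) := by
            rw [Finset.mul_sum]
            refine Finset.sum_congr rfl fun j _ => ?_
            field_simp
        _ ≤ θ * ∑ j ∈ F, ∑ i ∈ V, g i j * |h i| :=
            mul_le_mul_of_nonneg_left hFbound hθ0
        _ ≤ θ * (μ * P1) := mul_le_mul_of_nonneg_left hFγ hθ0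
        _ = μ * (P1 * θ) := by ring
  -- bounding P1 * θ
  have hPθ : P1 * θ ≤ E + 2*t*(sqa*N)/(r:ℝ) := by
    have hX0 : 0 ≤ 2*t*(sqa*N)/(r:ℝ) := by
      apply div_nonneg _ hrR.le
      apply mul_nonneg (by linarith only [ht0]) (mul_nonneg hsqa0.le hN0)
    rcases le_total mm (Q'/(r:ℝ)) with hcase | hcase
    · rw [hθdef, max_eq_right hcase]
      have e1 : P1 * Q' ≤ P1 * (P1 + 2*((s-a:ℕ):ℝ)*mm + 2*t) :=
        mul_le_mul_of_nonneg_left hQ'bound hP10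
      have e1' : P1 * (P1 + 2*((s-a:ℕ):ℝ)*mm + 2*t)
          = P1*P1 + 2*((s-a:ℕ):ℝ)*(P1*mm) + 2*t*P1 := by ring
      have e2 : P1 * P1 ≤ (a:ℝ) * E := by nlinarith only [hP1sq]
      have e3 : 2*((s-a:ℕ):ℝ)*(P1*mm) ≤ 2*((s-a:ℕ):ℝ)*E := by
        apply mul_le_mul_of_nonneg_left hP1mE
        positivity
      have e4 : 2*t*P1 ≤ 2*t*(sqa*N) := by
        apply mul_le_mul_of_nonneg_left hP1N
        linarith only [ht0]
      have e5 : (a:ℝ)*E + 2*((s-a:ℕ):ℝ)*E = (r:ℝ)*E := by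
        rw [hsacast, hrcast]; ring
      have h1 : P1 * Q' ≤ (r:ℝ)*E + 2*t*(sqa*N) := by
        linarith only [e1, e1', e2, e3, e4, e5]
      have h2 : P1 * (Q'/(r:ℝ)) = (P1*Q')/(r:ℝ) := by ring
      rw [h2, div_le_iff₀ hrR]
      have h3 : (E + 2*t*(sqa*N)/(r:ℝ))*(r:ℝ) = E*(r:ℝ) + 2*t*(sqa*N) := by
        field_simp
      rw [h3]
      linarith only [h1]
    · rw [hθdef, max_eq_left hcase]
      linarith only [hP1mE, hX0]
  -- the key inequality before dividing by N
  have hKEY0 : (1 - μ' - C*μ) * E ≤ sqa * N * (2*η + 2*μ*t/(r:ℝ)) := by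
    have k1 : E ≤ 2*η*P1 + (μ'*E + μ*(P1*θ)) := by linarith only [hI1, hintra, hcross]
    have k2 : μ*(P1*θ) ≤ μ*E + μ*(2*t*(sqa*N)/(r:ℝ)) := by
      have h1 := mul_le_mul_of_nonneg_left hPθ hμ0
      have h2 : μ*(E + 2*t*(sqa*N)/(r:ℝ)) = μ*E + μ*(2*t*(sqa*N)/(r:ℝ)) := by ring
      linarith only [h1, h2]
    have k3 : μ*E ≤ C*μ*E := by
      have h1 : 0 ≤ (C-1)*(μ*E) := mul_nonneg (by linarith only [hC1]) (mul_nonneg hμ0 hE0)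
      linarith only [h1]
    have k4 : 2*η*P1 ≤ 2*η*(sqa*N) := by
      apply mul_le_mul_of_nonneg_left hP1N
      linarith only [hη]
    have hring : sqa*N*(2*η + 2*μ*t/(r:ℝ))
        = 2*η*(sqa*N) + μ*(2*t*(sqa*N)/(r:ℝ)) := by ring
    linarith only [k1, k2, k3, k4, hring]
  -- case h = 0
  by_cases hNz : N = 0
  · -- then h ≡ 0 and the LHS is zero
    have hE00 : E = 0 := by rw [← hN2, hNz]; ring
    have hV0 : ∀ i ∈ V, h i = 0 := by
      intro i hi
      have h1 : ∀ i ∈ V, (0:ℝ) ≤ h i^2 := fun i _ => sq_nonneg _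
      have h2 : ∑ i ∈ V, h i^2 = 0 := by rw [← hEdef]; exact hE00
      have h3 := (Finset.sum_eq_zero_iff_of_nonneg h1).1 h2 i hi
      exact pow_eq_zero_iff (two_ne_zero) |>.1 h3
    have hmm0 : mm = 0 := by
      obtain ⟨i₀, hi₀⟩ := hVne
      have h1 := hmge i₀ hi₀
      rw [hV0 i₀ hi₀] at h1
      simp only [abs_zero] at h1
      linarith only [h1, hm0]
    have hh0 : ∀ i, h i = 0 := by
      intro i
      by_cases hiV : i ∈ V
      · exact hV0 i hiV
      · have h1 := hmle i hiV
        rw [hmm0] at h1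
        exact abs_eq_zero.1 (le_antisymm h1 (abs_nonneg _))
    have hsum0 : (∑ i, (xh i - x i)^2) = 0 := by
      apply Finset.sum_eq_zero
      intro i _
      have e : xh i - x i = h i := by simp only [hhdef]
      rw [e, hh0 i]
      ring
    rw [hsum0, Real.sqrt_zero]
    have g1 : 0 ≤ 2*Real.sqrt 2*Real.sqrt s/(1-μ'-C*μ)*η := by
      apply mul_nonneg _ hη
      apply div_nonneg _ hD.le
      positivity
    have g2 : 0 ≤ (Real.sqrt 2*((s:ℝ)/a)*μ/((1-μ'-C*μ)*C) + 1)*(2*t/Real.sqrt s) := by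
      apply mul_nonneg
      · have h1 : 0 ≤ Real.sqrt 2*((s:ℝ)/a)*μ/((1-μ'-C*μ)*C) := by
          apply div_nonneg
          · apply mul_nonneg _ hμ0
            positivity
          · exact mul_nonneg hD.le hC0.le
        linarith only [h1]
      · apply div_nonneg _ (Real.sqrt_nonneg _)
        linarith only [ht0]
    linarith only [g1, g2]
  -- main case: divide by N
  have hNpos : 0 < N := lt_of_le_of_ne hN0 (Ne.symm hNz)
  have hKEY1 : (1 - μ' - C*μ) * N ≤ sqa * (2*η + 2*μ*t/(r:ℝ)) := by
    have h1 : ((1-μ'-C*μ)*N)*N ≤ (sqa*(2*η + 2*μ*t/(r:ℝ)))*N := by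
      have e1 : ((1-μ'-C*μ)*N)*N = (1-μ'-C*μ)*E := by rw [← hN2]; ring
      have e2 : (sqa*(2*η + 2*μ*t/(r:ℝ)))*N = sqa*N*(2*η+2*μ*t/(r:ℝ)) := by ring
      rw [e1, e2]; exact hKEY0
    exact le_of_mul_le_mul_right h1 hNpos
  -- more square roots
  set sq2s := Real.sqrt (2*(s:ℝ)) with hsq2sdef
  have h2s0 : (0:ℝ) < 2*(s:ℝ) := by linarith only [hsR]
  have hsq2s0 : 0 < sq2s := by rw [hsq2sdef]; exact Real.sqrt_pos.2 h2s0
  have hsq2s2 : sq2s^2 = 2*(s:ℝ) := by rw [hsq2sdef]; exact Real.sq_sqrt h2s0.le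
  clear_value sq2s
  set sqs := Real.sqrt (s:ℝ) with hsqsdef
  have hsqs0 : 0 < sqs := by rw [hsqsdef]; exact Real.sqrt_pos.2 (by linarith only [hsR])
  have hsqs2 : sqs^2 = (s:ℝ) := by rw [hsqsdef]; exact Real.sq_sqrt (by linarith only [hsR])
  set sq2 := Real.sqrt 2 with hsq2def
  have hsq20 : 0 < sq2 := by rw [hsq2def]; exact Real.sqrt_pos.2 (by norm_num)
  have hsq22 : sq2^2 = 2 := by rw [hsq2def]; exact Real.sq_sqrt (by norm_num)
  have hsq2s_eq : sq2s = sq2 * sqs := by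
    rw [hsq2sdef, hsq2def, hsqsdef, ← Real.sqrt_mul (by norm_num : (0:ℝ) ≤ 2)]
  clear_value sqs sq2
  set sqr := Real.sqrt (r:ℝ) with hsqrdef
  have hsqr0 : 0 < sqr := by rw [hsqrdef]; exact Real.sqrt_pos.2 hrR
  have hsqr2 : sqr^2 = (r:ℝ) := by rw [hsqrdef]; exact Real.sq_sqrt hrR.le
  have hCeq : C = sqr / sqa := by
    have h1 : Real.sqrt ((r:ℝ)/(a:ℝ)) = Real.sqrt (r:ℝ)/Real.sqrt (a:ℝ) :=
      Real.sqrt_div hrR.le _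
    rw [hC, ← hrcast, h1, ← hsqrdef, ← hsqadef]
  clear_value sqr
  -- bound on the total sum of squares
  have hTOT : (∑ i, (xh i - x i)^2) ≤ (sq2s/sqa*N + t/sq2s)^2 := by
    have hsplitTOT : (∑ i, (xh i - x i)^2) = E + ∑ j ∈ Vᶜ, h j^2 := by
      have e : (∑ i, (xh i - x i)^2) = ∑ i, h i^2 :=
        Finset.sum_congr rfl fun i _ => by simp only [hhdef]
      rw [e, ← Finset.sum_add_sum_compl V (fun i => h i^2), hEdef]
    have hT2 : ∑ j ∈ Vᶜ, h j^2 ≤ mm * Q' := by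
      rw [hQ'def, Finset.mul_sum]
      refine Finset.sum_le_sum fun j hj => ?_
      have h1 : |h j| ≤ mm := hmle j (Finset.mem_compl.1 hj)
      calc h j^2 = |h j| * |h j| := by rw [← sq_abs]; ring
        _ ≤ mm * |h j| := mul_le_mul_of_nonneg_right h1 (abs_nonneg _)
    have hmQ : mm * Q' ≤ E + 2*((s-a:ℕ):ℝ)*mm^2 + 2*t*mm := by
      have e1 : mm * Q' ≤ mm * (P1 + 2*((s-a:ℕ):ℝ)*mm + 2*t) :=
        mul_le_mul_of_nonneg_left hQ'bound hm0
      have e2 : mm * P1 = P1 * mm := by ring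
      have e3 : mm*(P1 + 2*((s-a:ℕ):ℝ)*mm + 2*t)
          = P1*mm + 2*((s-a:ℕ):ℝ)*mm^2 + 2*t*mm := by ring
      linarith only [e1, e2, e3, hP1mE]
    have hBsq : (sq2s/sqa*N + t/sq2s)^2
        = sq2s^2/sqa^2*E + 2*(t*N/sqa) + t^2/sq2s^2 := by
      rw [← hN2]
      field_simp
      ring
    have q0 : (0:ℝ) ≤ 2*((s:ℝ)-a)/a := by
      apply div_nonneg _ haR.le
      linarith only [hasR]
    have q1 := mul_le_mul_of_nonneg_left ham2 q0
    have q2 : 2*((s:ℝ)-a)/(a:ℝ)*((a:ℝ)*mm^2) = 2*((s:ℝ)-a)*mm^2 := by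
      field_simp
    have q3 : (sq2s^2/sqa^2 - 2)*E = 2*((s:ℝ)-a)/a*E := by
      have hc : sq2s^2/sqa^2 - 2 = 2*((s:ℝ)-a)/a := by
        rw [hsq2s2, hsqa2]
        field_simp
      rw [hc]
    have p1 : 2*((s-a:ℕ):ℝ)*mm^2 ≤ (sq2s^2/sqa^2 - 2)*E := by
      rw [hsacast]
      linarith only [q1, q2, q3]
    have p2 : 2*t*mm ≤ 2*(t*N/sqa) := by
      have h1 : mm ≤ N/sqa := by
        rw [le_div_iff₀ hsqa0]
        linarith only [hmN]
      have h2 := mul_le_mul_of_nonneg_left h1 (by linarith only [ht0] : (0:ℝ) ≤ 2*t)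
      have h3 : 2*t*(N/sqa) = 2*(t*N/sqa) := by ring
      linarith only [h2, h3]
    have p3 : 0 ≤ t^2/sq2s^2 := by positivity
    linarith only [hsplitTOT, hT2, hmQ, p1, p2, p3, hBsq]
  have hB0 : 0 ≤ sq2s/sqa*N + t/sq2s := by
    apply add_nonneg
    · exact mul_nonneg (div_nonneg hsq2s0.le hsqa0.le) hN0
    · exact div_nonneg ht0 hsq2s0.le
  have hsqrtTOT : Real.sqrt (∑ i, (xh i - x i)^2) ≤ sq2s/sqa*N + t/sq2s := by
    calc Real.sqrt (∑ i, (xh i - x i)^2) ≤ Real.sqrt ((sq2s/sqa*N + t/sq2s)^2) :=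
          Real.sqrt_le_sqrt hTOT
      _ = sq2s/sqa*N + t/sq2s := Real.sqrt_sq hB0
  -- final assembly
  have hNle : N ≤ sqa*(2*η + 2*μ*t/(r:ℝ))/(1-μ'-C*μ) := by
    rw [le_div_iff₀ hD]
    linarith only [hKEY1]
  have hfinal1 : sq2s/sqa*N ≤ 2*sq2s*η/(1-μ'-C*μ) + 2*sq2s*μ*t/((r:ℝ)*(1-μ'-C*μ)) := by
    have hcoef : 0 ≤ sq2s/sqa := div_nonneg hsq2s0.le hsqa0.le
    have h1 := mul_le_mul_of_nonneg_left hNle hcoef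
    have h2 : sq2s/sqa*(sqa*(2*η + 2*μ*t/(r:ℝ))/(1-μ'-C*μ))
        = 2*sq2s*η/(1-μ'-C*μ) + 2*sq2s*μ*t/((r:ℝ)*(1-μ'-C*μ)) := by
      field_simp
    linarith only [h1, h2]
  have hsasr : sqa*sqr ≤ (r:ℝ) := by
    have h1 : sqa^2 ≤ sqr^2 := by rw [hsqa2, hsqr2]; exact harR
    have h2 : sqa ≤ sqr := by nlinarith only [h1, hsqa0, hsqr0]
    nlinarith only [h2, hsqr0, hsqr2, hsqa0]
  have hCsqa : C * sqa = sqr := by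
    rw [hCeq]
    field_simp
  have hRHSeq : sq2*((s:ℝ)/a)*μ/((1-μ'-C*μ)*C)*(2*t/sqs)
      = 2*sq2s*μ*t/((sqa*sqr)*(1-μ'-C*μ)) := by
    rw [hsq2s_eq, ← hCsqa]
    rw [show (s:ℝ) = sqs^2 from hsqs2.symm, show (a:ℝ) = sqa^2 from hsqa2.symm]
    field_simp [hD.ne', hsqa0.ne', hsqs0.ne', hC0.ne']
  have hBle : 2*sq2s*μ*t/((r:ℝ)*(1-μ'-C*μ)) ≤ 2*sq2s*μ*t/((sqa*sqr)*(1-μ'-C*μ)) := by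
    have hnum : 0 ≤ 2*sq2s*μ*t := by
      apply mul_nonneg _ ht0
      apply mul_nonneg _ hμ0
      positivity
    have hden1 : 0 < (sqa*sqr)*(1-μ'-C*μ) := mul_pos (mul_pos hsqa0 hsqr0) hD
    have hden2 : (sqa*sqr)*(1-μ'-C*μ) ≤ (r:ℝ)*(1-μ'-C*μ) :=
      mul_le_mul_of_nonneg_right hsasr hD.le
    have hden0 : 0 < (r:ℝ)*(1-μ'-C*μ) := mul_pos hrR hD
    rw [div_le_div_iff₀ hden0 hden1]
    have := mul_le_mul_of_nonneg_left hden2 hnum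
    linarith only [this]
  have hCpiece : t/sq2s ≤ 2*t/sqs := by
    rw [div_le_div_iff₀ hsq2s0 hsqs0]
    have h1 : sqs ≤ sq2s := by nlinarith only [hsqs2, hsq2s2, hsqs0, hsq2s0, hsR]
    nlinarith only [ht0, h1, hsqs0, hsq2s0]
  have hA : 2*sq2s*η/(1-μ'-C*μ) = 2*sq2*sqs/(1-μ'-C*μ)*η := by
    rw [hsq2s_eq]; ring
  have hexpand : (sq2*((s:ℝ)/a)*μ/((1-μ'-C*μ)*C) + 1)*(2*t/sqs)
      = sq2*((s:ℝ)/a)*μ/((1-μ'-C*μ)*C)*(2*t/sqs) + 2*t/sqs := by ring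
  linarith only [hsqrtTOT, hfinal1, hA, hBle, hRHSeq, hCpiece, hexpand]
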